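/- Let R be an expanding edge replacement system and Gl_R its gluing automaton. Every Type 2 transition of Gl_R ends in a state q₁(i,α;j,β) with α,β ∈ {in,out,lp}; that is, the entries db⁺ and db⁻ can only appear in the target state of a Type 1 transition, never of a Type 2 transition. Moreover, when the source state q₁(i,γ;j,δ) has γ∈{db⁺} (or δ∈{db⁺,db⁻}), an edge a of Γ_i (respectively b of Γ_j) can be incident on at most one of the two boundary vertices ι_i, τ_i (respectively ι_j, τ_j), so the Type 2 transition rule is unambiguous. -/
import Mathlib


/-!
Formalization of edge replacement systems, their limit-space gluing relation,
and the gluing automaton, following Belk–Forrest and the paper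
"Rationality of the gluing of edge replacement systems".
-/

namespace ERSPaper

/-- The five adjacency-type symbols `in`, `out`, `lp`, `db⁺`, `db⁻`. -/
inductive EType : Type
  | inn : EType
  | out : EType
  | lp : EType
  | dbp : EType
  | dbm : EType
  deriving DecidableEq

/-- An edge replacement system satisfying the loop-color assumption.
`V z` / `E z` are the vertices/edges of the base graph (`z = none`) or of the
replacement graph `Γ c` (`z = some c`).  For loop colors the two boundary
vertices coincide (the single boundary vertex `λ_c`); for non-loop colors they
are distinct.  The field `loop_iff` is the loop-color assumption: an edge is a
loop if and only if its color is a loop color. -/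
structure ERS : Type 1 where
  Col : Type
  [colFintype : Fintype Col]
  [colDecEq : DecidableEq Col]
  V : Option Col → Type
  E : Option Col → Type
  [vFintype : ∀ z, Fintype (V z)]
  [eFintype : ∀ z, Fintype (E z)]
  [vDecEq : ∀ z, DecidableEq (V z)]
  ini : ∀ z, E z → V z
  fin : ∀ z, E z → V z
  col : ∀ z, E z → Col
  loopCol : Col → Prop
  bIni : ∀ c : Col, V (some c)
  bFin : ∀ c : Col, V (some c)
  bd_eq_iff : ∀ c : Col, (bIni c = bFin c ↔ loopCol c)
  loop_iff : ∀ z (e : E z), (ini z e = fin z e ↔ loopCol (col z e))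

attribute [instance] ERS.colFintype ERS.colDecEq ERS.vFintype ERS.eFintype ERS.vDecEq

namespace ERS

/-- The alphabet `Σ`: the disjoint union of the edge sets of the base graph and
of all the replacement graphs. -/
def Alph (R : ERS) : Type := Σ z : Option R.Col, R.E z

/-- Membership in the symbol space `Ω_R`: infinite directed walks on the color
graph starting at `q(0)`, i.e. `x₀` is an edge of the base graph and `x_{l+1}`
is an edge of `Γ_{c(x_l)}`. -/
def IsWalk (R : ERS) (x : ℕ → R.Alph) : Prop :=
  (x 0).1 = none ∧ ∀ l : ℕ, (x (l + 1)).1 = some (R.col (x l).1 (x l).2)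

/-- The finite word `x₀ … x_m` belongs to `E_R`. -/
def IsWalkUpTo (R : ERS) (x : ℕ → R.Alph) (m : ℕ) : Prop :=
  (x 0).1 = none ∧ ∀ l : ℕ, l < m → (x (l + 1)).1 = some (R.col (x l).1 (x l).2)

theorem IsWalk.upTo {R : ERS} {x : ℕ → R.Alph} (hx : R.IsWalk x) (m : ℕ) :
    R.IsWalkUpTo x m :=
  ⟨hx.1, fun l _ => hx.2 l⟩

end ERS

/-- A finite graph whose edges are colored by the colors of `R`. -/
structure GraphData (R : ERS) : Type 1 where
  V : Type
  E : Type
  ι : E → V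
  τ : E → V
  col : E → R.Col

/-- An edge is incident on a vertex. -/
def GraphData.IncidentOn {R : ERS} (G : GraphData R) (e : G.E) (v : G.V) : Prop :=
  G.ι e = v ∨ G.τ e = v

/-- Two edges are incident on a common vertex. -/
def GraphData.Adjacent {R : ERS} (G : GraphData R) (e f : G.E) : Prop :=
  ∃ v : G.V, G.IncidentOn e v ∧ G.IncidentOn f v

namespace ERS

/-- When expanding the edge `e`, a vertex `v` of the replacement graph
`Γ_{c(e)}` is attached: boundary vertices go to the endpoints of `e`,
interior vertices give fresh vertices. -/
def attach (R : ERS) (G : GraphData R) (e : G.E) (v : R.V (some (G.col e))) :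
    G.V ⊕ (Σ e : G.E,
      {v : R.V (some (G.col e)) // v ≠ R.bIni (G.col e) ∧ v ≠ R.bFin (G.col e)}) :=
  if h1 : v = R.bIni (G.col e) then Sum.inl (G.ι e)
  else if h2 : v = R.bFin (G.col e) then Sum.inl (G.τ e)
  else Sum.inr ⟨e, v, h1, h2⟩

/-- The simultaneous expansion of every edge of `G`. -/
def expandG (R : ERS) (G : GraphData R) : GraphData R where
  V := G.V ⊕ (Σ e : G.E,
    {v : R.V (some (G.col e)) // v ≠ R.bIni (G.col e) ∧ v ≠ R.bFin (G.col e)})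
  E := Σ e : G.E, R.E (some (G.col e))
  ι := fun p => R.attach G p.1 (R.ini (some (G.col p.1)) p.2)
  τ := fun p => R.attach G p.1 (R.fin (some (G.col p.1)) p.2)
  col := fun p => R.col (some (G.col p.1)) p.2

/-- The base graph, as graph data. -/
def base (R : ERS) : GraphData R :=
  ⟨R.V none, R.E none, R.ini none, R.fin none, R.col none⟩

/-- The full expansion sequence `E_m`. -/
def fullExp (R : ERS) : ℕ → GraphData R
  | 0 => R.base
  | m + 1 => R.expandG (R.fullExp m)

theorem col_cast (R : ERS) (p : R.Alph) (z : Option R.Col) (h : p.1 = z) :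
    R.col z (cast (congrArg R.E h) p.2) = R.col p.1 p.2 := by
  rcases p with ⟨w, e⟩
  cases h
  rfl

/-- The edge of the full expansion `E_m` labeled by the word `x₀ … x_m`,
together with the fact that its color is the color of its last letter. -/
def wordEdge (R : ERS) (x : ℕ → R.Alph) :
    (m : ℕ) → R.IsWalkUpTo x m →
      {e : (R.fullExp m).E // (R.fullExp m).col e = R.col (x m).1 (x m).2}
  | 0, hx => ⟨cast (congrArg R.E hx.1) (x 0).2, R.col_cast (x 0) none hx.1⟩
  | m + 1, hx =>
    let prev := R.wordEdge x m ⟨hx.1, fun l hl => hx.2 l (Nat.lt_succ_of_lt hl)⟩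
    let h : (x (m + 1)).1 = some ((R.fullExp m).col prev.1) :=
      (hx.2 m (Nat.lt_succ_self m)).trans (congrArg some prev.2.symm)
    ⟨⟨prev.1, cast (congrArg R.E h) (x (m + 1)).2⟩, R.col_cast (x (m + 1)) _ h⟩

/-- The gluing relation: two elements of `Ω_R` are glued when, for every large
enough `n`, their length-`(n+1)` prefixes are incident on a common vertex of
the full expansion `E_n`. -/
def Glued (R : ERS) (x y : ℕ → R.Alph) (hx : R.IsWalk x) (hy : R.IsWalk y) : Prop :=
  ∃ N : ℕ, ∀ n : ℕ, N ≤ n →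
    (R.fullExp n).Adjacent (R.wordEdge x n (hx.upTo n)).1 (R.wordEdge y n (hy.upTo n)).1

/-- The expanding condition on a replacement system (formulated after the
identification of the boundary vertices for loop colors). -/
structure Expanding (R : ERS) : Prop where
  no_isolated : ∀ z (v : R.V z), ∃ e : R.E z, R.ini z e = v ∨ R.fin z e = v
  no_bd_edge : ∀ c : R.Col, ¬ R.loopCol c → ∀ e : R.E (some c),
    ¬ ((R.ini (some c) e = R.bIni c ∧ R.fin (some c) e = R.bFin c) ∨
       (R.ini (some c) e = R.bFin c ∧ R.fin (some c) e = R.bIni c))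
  two_edges : ∀ c : R.Col, 2 ≤ Fintype.card (R.E (some c))
  interior : ∀ c : R.Col, ∃ v : R.V (some c), v ≠ R.bIni c ∧ v ≠ R.bFin c

end ERS

/-- `EndAt ι τ v α` : the edge with initial vertex `ι` and terminal vertex `τ`
is incident on `v`, in the fashion recorded by `α`: incoming (`in`), outgoing
(`out`) or a loop (`lp`). -/
inductive EndAt {V : Type} : V → V → V → EType → Prop
  | inn {i v : V} : i ≠ v → EndAt i v v .inn
  | out {t v : V} : v ≠ t → EndAt v t v .out
  | lp {v : V} : EndAt v v v .lp

/-- Two non-loop edges (given by their endpoints) are parallel. -/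
def Parallel {V : Type} (ia ta ib tb : V) : Prop :=
  ia ≠ ta ∧ ((ia = ib ∧ ta = tb) ∨ (ia = tb ∧ ta = ib))

/-- The Type 1 adjacency-type rule for two distinct adjacent edges, given by
their endpoints: parallel non-loops give the `db` types (same or opposite
orientation), and otherwise the unique common vertex `v` determines the types
via `EndAt`. -/
inductive AdjType {V : Type} : V → V → V → V → EType → EType → Prop
  | dbSame {u v : V} : u ≠ v → AdjType u v u v .dbp .dbp
  | dbOpp {u v : V} : u ≠ v → AdjType u v v u .dbp .dbm
  | single {ia ta ib tb v : V} {α β : EType} :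
      ¬ Parallel ia ta ib tb → EndAt ia ta v α → EndAt ib tb v β →
      AdjType ia ta ib tb α β

/-- The states of the gluing automaton `Gl_R`. -/
inductive GlState (R : ERS) : Type
  | q0 : Option R.Col → GlState R
  | q1 : R.Col → EType → R.Col → EType → GlState R

/-- Membership in `Q₀`. -/
def GlState.inQ0 {R : ERS} : GlState R → Prop
  | .q0 _ => True
  | _ => False

/-- Membership in `Q₁`. -/
def GlState.inQ1 {R : ERS} : GlState R → Prop
  | .q1 _ _ _ _ => True
  | _ => False

/-- The defining conditions for states of `Q₁`: `γ ≠ db⁻` and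
(`δ ∈ {db⁺, db⁻}` iff `γ = db⁺`). -/
def GlState.Valid {R : ERS} : GlState R → Prop
  | .q0 _ => True
  | .q1 _ γ _ δ => γ ≠ .dbm ∧ ((δ = .dbp ∨ δ = .dbm) ↔ γ = .dbp)

/-- The tracked boundary vertex of `Γ_c` for a non-`db` symbol:
`τ_c` for `in`, `ι_c` for `out`, and `λ_c` (the identified boundary vertex)
for `lp`. -/
def trackedV (R : ERS) (c : R.Col) : EType → Set (R.V (some c))
  | .inn => {R.bFin c}
  | .out => {R.bIni c}
  | .lp => {R.bIni c}
  | _ => ∅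

/-- The pairs of tracked vertices of a state `q₁(i,γ;j,δ)`. -/
inductive TrackedPair (R : ERS) (i j : R.Col) :
    EType → EType → R.V (some i) → R.V (some j) → Prop
  | nondb {γ δ : EType} {u : R.V (some i)} {w : R.V (some j)} :
      u ∈ trackedV R i γ → w ∈ trackedV R j δ → TrackedPair R i j γ δ u w
  | dbppIni : TrackedPair R i j .dbp .dbp (R.bIni i) (R.bIni j)
  | dbppFin : TrackedPair R i j .dbp .dbp (R.bFin i) (R.bFin j)
  | dbpmIni : TrackedPair R i j .dbp .dbm (R.bIni i) (R.bFin j)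
  | dbpmFin : TrackedPair R i j .dbp .dbm (R.bFin i) (R.bIni j)

/-- The transitions of the gluing automaton `Gl_R`. -/
inductive GlTrans (R : ERS) : GlState R → R.Alph × R.Alph → GlState R → Prop
  | type0 (z : Option R.Col) (e : R.E z) :
      GlTrans R (.q0 z) (⟨z, e⟩, ⟨z, e⟩) (.q0 (some (R.col z e)))
  | type1 (z : Option R.Col) (a b : R.E z) (hab : a ≠ b) {α β : EType}
      (h : AdjType (R.ini z a) (R.fin z a) (R.ini z b) (R.fin z b) α β) :
      GlTrans R (.q0 z) (⟨z, a⟩, ⟨z, b⟩) (.q1 (R.col z a) α (R.col z b) β)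
  | type2 (i j : R.Col) (γ δ : EType) (a : R.E (some i)) (b : R.E (some j))
      {u : R.V (some i)} {w : R.V (some j)}
      (hp : TrackedPair R i j γ δ u w) {α β : EType}
      (ha : EndAt (R.ini (some i) a) (R.fin (some i) a) u α)
      (hb : EndAt (R.ini (some j) b) (R.fin (some j) b) w β) :
      GlTrans R (.q1 i γ j δ) (⟨some i, a⟩, ⟨some j, b⟩)
        (.q1 (R.col (some i) a) α (R.col (some j) b) β)

/-- Infinite runs of `Gl_R` from the initial state `q₀(0)`. -/
def GlRun (R : ERS) (w : ℕ → R.Alph × R.Alph) (q : ℕ → GlState R) : Prop :=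
  q 0 = .q0 none ∧ ∀ l : ℕ, GlTrans R (q l) (w l) (q (l + 1))

/-- `Gl_R` recognizes the infinite sequence `w`. -/
def GlAccepts (R : ERS) (w : ℕ → R.Alph × R.Alph) : Prop :=
  ∃ q : ℕ → GlState R, GlRun R w q

/-- Finite runs of `Gl_R` processing the letters `w 0, …, w m`. -/
def GlRunFin (R : ERS) (w : ℕ → R.Alph × R.Alph) (m : ℕ) (q : ℕ → GlState R) : Prop :=
  q 0 = .q0 none ∧ ∀ l : ℕ, l ≤ m → GlTrans R (q l) (w l) (q (l + 1))

/-- `Gl_R` recognizes the finite word `w 0, …, w m`. -/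
def GlAcceptsFin (R : ERS) (w : ℕ → R.Alph × R.Alph) (m : ℕ) : Prop :=
  ∃ q : ℕ → GlState R, GlRunFin R w m q

/-- The transitions of the full sub-automaton `T_R` induced by `Q₀`. -/
def TTrans (R : ERS) (s : GlState R) (p : R.Alph × R.Alph) (t : GlState R) : Prop :=
  GlTrans R s p t ∧ s.inQ0 ∧ t.inQ0

/-- Finite runs of `T_R` processing the letters `w 0, …, w m`. -/
def TRunFin (R : ERS) (w : ℕ → R.Alph × R.Alph) (m : ℕ) (q : ℕ → GlState R) : Prop :=
  q 0 = .q0 none ∧ ∀ l : ℕ, l ≤ m → TTrans R (q l) (w l) (q (l + 1))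

/-- `T_R` recognizes the finite word `w 0, …, w m`. -/
def TAcceptsFin (R : ERS) (w : ℕ → R.Alph × R.Alph) (m : ℕ) : Prop :=
  ∃ q : ℕ → GlState R, TRunFin R w m q

end ERSPaper

namespace ERSPaper

private lemma endAt_mem {V : Type} {ia ta v : V} {α : EType}
    (h : EndAt ia ta v α) : ia = v ∨ ta = v := by
  cases h <;> simp

private lemma endAt_notDb {V : Type} {ia ta v : V} {α : EType}
    (h : EndAt ia ta v α) : α ≠ .dbp ∧ α ≠ .dbm := by
  cases h <;> exact ⟨by simp, by simp⟩

private lemma endAt_unique {V : Type} {ia ta v : V} {α β : EType}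
    (h : EndAt ia ta v α) (h' : EndAt ia ta v β) : α = β := by
  cases h <;> cases h' <;> simp_all

private lemma noDouble (R : ERS) (hR : R.Expanding) :
    ∀ c : R.Col, R.bIni c ≠ R.bFin c → ∀ e : R.E (some c),
      ¬ ((R.ini (some c) e = R.bIni c ∨ R.fin (some c) e = R.bIni c) ∧
         (R.ini (some c) e = R.bFin c ∨ R.fin (some c) e = R.bFin c)) := by
  intro c hne e ⟨h1, h2⟩
  have hnl : ¬ R.loopCol c := fun hl => hne ((R.bd_eq_iff c).mpr hl)
  rcases h1 with h1 | h1 <;> rcases h2 with h2 | h2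
  · exact hne (h1 ▸ h2)
  · exact hR.no_bd_edge c hnl e (Or.inl ⟨h1, h2⟩)
  · exact hR.no_bd_edge c hnl e (Or.inr ⟨h2, h1⟩)
  · exact hne (h1 ▸ h2)

private lemma tracked_unique (R : ERS) (hR : R.Expanding)
    {i j : R.Col} {δ : EType} {a : R.E (some i)} {b : R.E (some j)}
    {u u' : R.V (some i)} {w w' : R.V (some j)} {α α' β β' : EType}
    (hp : TrackedPair R i j .dbp δ u w) (hp' : TrackedPair R i j .dbp δ u' w')
    (ha : EndAt (R.ini (some i) a) (R.fin (some i) a) u α)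
    (ha' : EndAt (R.ini (some i) a) (R.fin (some i) a) u' α')
    (hb : EndAt (R.ini (some j) b) (R.fin (some j) b) w β)
    (hb' : EndAt (R.ini (some j) b) (R.fin (some j) b) w' β') :
    α = α' ∧ β = β' := by
  have keyI : ∀ {v v' : R.V (some i)} {ξ ξ' : EType},
      (v = R.bIni i ∨ v = R.bFin i) → (v' = R.bIni i ∨ v' = R.bFin i) →
      EndAt (R.ini (some i) a) (R.fin (some i) a) v ξ →
      EndAt (R.ini (some i) a) (R.fin (some i) a) v' ξ' → ξ = ξ' := by
    intro v v' ξ ξ' hv hv' h h'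
    have hvv : v = v' := by
      by_cases heq : R.bIni i = R.bFin i
      · rcases hv with rfl | rfl <;> rcases hv' with rfl | rfl <;> simp [heq]
      · rcases hv with rfl | rfl <;> rcases hv' with rfl | rfl
        · rfl
        · exact absurd ⟨endAt_mem h, endAt_mem h'⟩ (noDouble R hR i heq a)
        · exact absurd ⟨endAt_mem h', endAt_mem h⟩ (noDouble R hR i heq a)
        · rfl
    exact endAt_unique (hvv ▸ h) h'
  have keyJ : ∀ {v v' : R.V (some j)} {ξ ξ' : EType},
      (v = R.bIni j ∨ v = R.bFin j) → (v' = R.bIni j ∨ v' = R.bFin j) →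
      EndAt (R.ini (some j) b) (R.fin (some j) b) v ξ →
      EndAt (R.ini (some j) b) (R.fin (some j) b) v' ξ' → ξ = ξ' := by
    intro v v' ξ ξ' hv hv' h h'
    have hvv : v = v' := by
      by_cases heq : R.bIni j = R.bFin j
      · rcases hv with rfl | rfl <;> rcases hv' with rfl | rfl <;> simp [heq]
      · rcases hv with rfl | rfl <;> rcases hv' with rfl | rfl
        · rfl
        · exact absurd ⟨endAt_mem h, endAt_mem h'⟩ (noDouble R hR j heq b)
        · exact absurd ⟨endAt_mem h', endAt_mem h⟩ (noDouble R hR j heq b)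
        · rfl
    exact endAt_unique (hvv ▸ h) h'
  have hu : u = R.bIni i ∨ u = R.bFin i := by
    cases hp with
    | nondb h1 _ => exact absurd h1 (by simp [trackedV])
    | _ => simp
  have hu' : u' = R.bIni i ∨ u' = R.bFin i := by
    cases hp' with
    | nondb h1 _ => exact absurd h1 (by simp [trackedV])
    | _ => simp
  have hw : w = R.bIni j ∨ w = R.bFin j := by
    cases hp with
    | nondb h1 _ => exact absurd h1 (by simp [trackedV])
    | _ => simp
  have hw' : w' = R.bIni j ∨ w' = R.bFin j := by
    cases hp' with
    | nondb h1 _ => exact absurd h1 (by simp [trackedV])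
    | _ => simp
  exact ⟨keyI hu hu' ha ha', keyJ hw hw' hb hb'⟩

/-- Every Type 2 transition of `Gl_R` ends in a state
`q₁(i',α;j',β)` with `α, β ∈ {in, out, lp}`: the symbols `db⁺`, `db⁻` can only
appear in the target state of a Type 1 transition.  Moreover, when the source
state `q₁(i,γ;j,δ)` has `γ = db⁺` (or `δ ∈ {db⁺,db⁻}`), an edge of `Γ_i`
(respectively of `Γ_j`) can be incident on at most one of the two boundary
vertices `ι_i`, `τ_i` (respectively `ι_j`, `τ_j`) — this is what the second
conjunct states, for any color whose two boundary vertices are distinct — so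
the Type 2 transition rule out of a `db` state is unambiguous (third
conjunct: determinism). -/
theorem type2_targets_have_no_db (R : ERS) (hR : R.Expanding) :
    (∀ (i j : R.Col) (γ δ : EType) (p : R.Alph × R.Alph) (t : GlState R),
        GlTrans R (.q1 i γ j δ) p t →
          ∃ (i' j' : R.Col) (α β : EType),
            t = .q1 i' α j' β ∧
            α ≠ .dbp ∧ α ≠ .dbm ∧ β ≠ .dbp ∧ β ≠ .dbm) ∧
    (∀ c : R.Col, R.bIni c ≠ R.bFin c → ∀ e : R.E (some c),
        ¬ ((R.ini (some c) e = R.bIni c ∨ R.fin (some c) e = R.bIni c) ∧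
           (R.ini (some c) e = R.bFin c ∨ R.fin (some c) e = R.bFin c))) ∧
    (∀ (i j : R.Col) (δ : EType) (p : R.Alph × R.Alph) (t t' : GlState R),
        GlTrans R (.q1 i .dbp j δ) p t →
        GlTrans R (.q1 i .dbp j δ) p t' → t = t') := by
  refine ⟨?_, noDouble R hR, ?_⟩
  · intro i j γ δ p t h
    cases h with
    | type2 i j γ δ a b hp ha hb =>
      exact ⟨_, _, _, _, rfl, (endAt_notDb ha).1, (endAt_notDb ha).2,
        (endAt_notDb hb).1, (endAt_notDb hb).2⟩
  · intro i j δ p t t' h h'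
    cases h with
    | type2 i j γ δ a b hp ha hb =>
      cases h' with
      | type2 i j γ δ a' b' hp' ha' hb' =>
        obtain ⟨hα, hβ⟩ := tracked_unique R hR hp hp' ha ha' hb hb'
        rw [hα, hβ]

end ERSPaper
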